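/- arXiv:math/0602489 — 2 statements merged into one kernel-verified Lean document; each statement's English description precedes it below -/
import Mathlib

section
/- Let (A^•, d) be a cochain complex of real vector spaces with a right action of a group G by degree-preserving linear maps commuting with d, let ω ∈ A^m be G-invariant and exact, let 1 ≤ p ≤ m−1, and assume every closed element of A^q is exact for q = m−p, …, m−1. Suppose φ_0,…,φ_p and φ̄_0,…,φ̄_p are two sequences with φ_i, φ̄_i ∈ C^i(G, A^{m−i−1}), ω = −dφ_0 = −dφ̄_0, and δ'φ_{i−1} + δ''φ_i = 0, δ'φ̄_{i−1} + δ''φ̄_i = 0 for i = 1,…,p. Then there exists a cochain χ ∈ C^p(G, A^{m−p−1}) all of whose values are closed (d(χ(g_1,…,g_p)) = 0) such that δ'φ̄_p = δ'φ_p + δ'χ. Consequently, writing π : ker(d : A^{m−p−1} → A^{m−p}) → H^{m−p−1}(A) = ker d / im d for the projection onto cohomology (a map of right G-modules), both π∘δ'φ_p and π∘δ'φ̄_p are (p+1)-cocycles on G with values in the G-module H^{m−p−1}(A), and they are cohomologous: π∘δ'φ̄_p − π∘δ'φ_p = D(π∘χ). -/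
open scoped BigOperators

/-- Merge the `i`-th and `(i+1)`-st entries of a tuple of group elements by multiplication:
this produces the argument tuple `(g₁, …, g_i g_{i+1}, …, g_{p+1})` (0-indexed). -/
def mulIns {G : Type*} [Mul G] {p : ℕ} (g : Fin (p + 1) → G) (i : Fin p) : Fin p → G :=
  fun j =>
    if (j : ℕ) < (i : ℕ) then g j.castSucc
    else if (j : ℕ) = (i : ℕ) then g j.castSucc * g j.succ
    else g j.succ

/-- `δ'` : the differential of the standard complex of nonhomogeneous cochains of a group
`G` with values in a right `G`-module `A` (the right action being `act`):
`(Df)(g₁,…,g_{p+1}) = f(g₂,…,g_{p+1}) + ∑ (-1)^i f(g₁,…,g_i g_{i+1},…,g_{p+1})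
  + (-1)^{p+1} f(g₁,…,g_p)·g_{p+1}`. -/
def gd {G : Type*} [Mul G] {A : Type*} [AddCommGroup A] [Module ℝ A]
    (act : G → A →ₗ[ℝ] A) {p : ℕ} (f : (Fin p → G) → A) :
    (Fin (p + 1) → G) → A :=
  fun g =>
    f (Fin.tail g)
      + ∑ i : Fin p, ((-1 : ℝ) ^ ((i : ℕ) + 1)) • f (mulIns g i)
      + ((-1 : ℝ) ^ (p + 1)) • act (g (Fin.last p)) (f (Fin.init g))

/-- `δ''` : the second differential on `C^p(G, A^q)`,
`(δ''c)(g₁,…,g_p) = (−1)^p d (c (g₁,…,g_p))`. -/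
def gdd {G : Type*} {A : ℤ → Type*} [∀ q, AddCommGroup (A q)] [∀ q, Module ℝ (A q)]
    (d : ∀ q, A q →ₗ[ℝ] A (q + 1)) {p : ℕ} {q : ℤ} (c : (Fin p → G) → A q) :
    (Fin p → G) → A (q + 1) :=
  fun g => ((-1 : ℝ) ^ p) • d q (c g)

/-- Transport an element of a graded family along an equality of degrees. -/
def tr {A : ℤ → Type*} {q q' : ℤ} (h : q = q') (a : A q) : A q' := h ▸ a


lemma negpow_congr {a b : ℕ} (h : a % 2 = b % 2) : ((-1:ℝ))^a = (-1)^b := by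
  conv_lhs => rw [← Nat.div_add_mod a 2]
  conv_rhs => rw [← Nat.div_add_mod b 2]
  rw [pow_add, pow_add, pow_mul, pow_mul, h]
  norm_num

section FinIdent
variable {G : Type*} [Semigroup G] {p : ℕ}

lemma mulIns_mulIns (g : Fin (p + 2) → G) (i : Fin (p + 1)) (j : Fin p)
    (hji : (j : ℕ) < (i : ℕ)) :
    mulIns (mulIns g i) j
      = mulIns (mulIns g ⟨(j : ℕ), by omega⟩) ⟨(i : ℕ) - 1, by omega⟩ := by
  have hj := j.isLt
  have hi := i.isLt
  funext k
  have hk := k.isLt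
  simp only [mulIns, Fin.coe_castSucc, Fin.val_succ]
  split_ifs <;>
    first
      | rfl
      | omega
      | (simp only [Fin.succ_castSucc, mul_assoc])
      | (congr 1 <;> (apply Fin.ext; simp only [Fin.coe_castSucc, Fin.val_succ]; omega))

lemma tail_mulIns_zero (g : Fin (p + 2) → G) :
    Fin.tail (mulIns g 0) = Fin.tail (Fin.tail g) := by
  funext k
  simp only [Fin.tail, mulIns, Fin.val_succ, Fin.val_zero]
  split_ifs <;> first | contradiction | omega | rfl

lemma tail_mulIns_succ (g : Fin (p + 2) → G) (i : Fin p) :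
    Fin.tail (mulIns g i.succ) = mulIns (Fin.tail g) i := by
  funext k
  simp only [Fin.tail, mulIns, Fin.val_succ, Fin.coe_castSucc]
  split_ifs <;>
    first
      | rfl
      | omega
      | (simp only [Fin.succ_castSucc])
      | (congr 1 <;> (apply Fin.ext; simp only [Fin.coe_castSucc, Fin.val_succ]; omega))

lemma init_mulIns_castSucc (g : Fin (p + 2) → G) (i : Fin p) :
    Fin.init (mulIns g i.castSucc) = mulIns (Fin.init g) i := by
  funext k
  simp only [Fin.init, mulIns, Fin.coe_castSucc, Fin.val_succ]
  split_ifs <;>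
    first
      | rfl
      | omega
      | (simp only [Fin.succ_castSucc])
      | (congr 1 <;> (apply Fin.ext; simp only [Fin.coe_castSucc, Fin.val_succ]; omega))

lemma init_mulIns_last (g : Fin (p + 2) → G) :
    Fin.init (mulIns g (Fin.last p)) = Fin.init (Fin.init g) := by
  funext k
  have hk := k.isLt
  simp only [Fin.init, mulIns, Fin.coe_castSucc, Fin.val_last]
  rw [if_pos (by omega)]

lemma mulIns_castSucc_last (g : Fin (p + 2) → G) (i : Fin p) :
    (mulIns g i.castSucc) (Fin.last p) = g (Fin.last (p + 1)) := by
  have hi := i.isLt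
  simp only [mulIns, Fin.val_last, Fin.coe_castSucc]
  rw [if_neg (by omega), if_neg (by omega), Fin.succ_last]

lemma mulIns_last_last (g : Fin (p + 2) → G) :
    (mulIns g (Fin.last p)) (Fin.last p)
      = g ((Fin.last p).castSucc) * g (Fin.last (p + 1)) := by
  simp only [mulIns, Fin.val_last, lt_self_iff_false, if_false, if_pos rfl, Fin.succ_last,
    if_true, Nat.succ_eq_add_one]

end FinIdent

section GdGd
variable {G : Type*} [Group G] {A : Type*} [AddCommGroup A] [Module ℝ A]

set_option maxHeartbeats 1000000 in
lemma pair_cancel_lt {p : ℕ} (f : (Fin p → G) → A) (g : Fin (p + 2) → G)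
    (a : Fin (p + 1) × Fin p) (h : (a.2 : ℕ) < (a.1 : ℕ)) :
    ((-1:ℝ) ^ ((a.1:ℕ) + 1) * (-1) ^ ((a.2:ℕ) + 1)) • f (mulIns (mulIns g a.1) a.2)
      + ((-1:ℝ) ^ (((⟨(a.2 : ℕ), by have := a.2.isLt; omega⟩ : Fin (p+1)):ℕ) + 1)
          * (-1) ^ (((⟨(a.1 : ℕ) - 1, by have := a.1.isLt; have := a.2.isLt; omega⟩ : Fin p):ℕ) + 1)) •
          f (mulIns (mulIns g ⟨(a.2 : ℕ), by have := a.2.isLt; omega⟩)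
              (⟨(a.1 : ℕ) - 1, by have := a.1.isLt; have := a.2.isLt; omega⟩ : Fin p)) = 0 := by
  have h1a := a.1.isLt
  have h2a := a.2.isLt
  rw [mulIns_mulIns g a.1 a.2 h]
  match_scalars
  obtain ⟨x, hx⟩ : ∃ x, (a.1 : ℕ) = x + 1 := ⟨(a.1:ℕ) - 1, by omega⟩
  simp only [hx, Nat.add_sub_cancel]
  ring

set_option maxHeartbeats 1000000 in
lemma pair_cancel_ge {p : ℕ} (f : (Fin p → G) → A) (g : Fin (p + 2) → G)
    (a : Fin (p + 1) × Fin p) (h : ¬ ((a.2 : ℕ) < (a.1 : ℕ))) :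
    ((-1:ℝ) ^ ((a.1:ℕ) + 1) * (-1) ^ ((a.2:ℕ) + 1)) • f (mulIns (mulIns g a.1) a.2)
      + ((-1:ℝ) ^ (((a.2.succ : Fin (p+1)):ℕ) + 1)
          * (-1) ^ (((⟨(a.1 : ℕ), by have := a.2.isLt; omega⟩ : Fin p):ℕ) + 1)) •
          f (mulIns (mulIns g a.2.succ) (⟨(a.1 : ℕ), by have := a.2.isLt; omega⟩ : Fin p)) = 0 := by
  have h1a := a.1.isLt
  have h2a := a.2.isLt
  have hlt : ((⟨(a.1 : ℕ), by omega⟩ : Fin p) : ℕ) < ((a.2.succ : Fin (p+1)) : ℕ) := by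
    simp only [Fin.val_succ]; omega
  rw [mulIns_mulIns g a.2.succ ⟨(a.1 : ℕ), by omega⟩ hlt]
  have e1 : (⟨((⟨(a.1 : ℕ), by omega⟩ : Fin p) : ℕ), by omega⟩ : Fin (p+1)) = a.1 :=
    Fin.ext rfl
  have e2 : (⟨((a.2.succ : Fin (p+1)) : ℕ) - 1, by simp only [Fin.val_succ]; omega⟩ : Fin p)
      = a.2 := Fin.ext (by simp only [Fin.val_succ]; omega)
  rw [e1, e2]
  match_scalars
  simp only [Fin.val_succ]
  ring

set_option maxHeartbeats 1000000 in
lemma sum_mulIns_mulIns_eq_zero {p : ℕ}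
    (f : (Fin p → G) → A) (g : Fin (p + 2) → G) :
    (∑ x : Fin (p + 1), ∑ y : Fin p,
      ((-1:ℝ) ^ ((x:ℕ) + 1) * (-1) ^ ((y:ℕ) + 1)) • f (mulIns (mulIns g x) y)) = 0 := by
  have hprod := Fintype.sum_prod_type (f := fun a : Fin (p + 1) × Fin p =>
    ((-1:ℝ) ^ ((a.1:ℕ) + 1) * (-1) ^ ((a.2:ℕ) + 1)) • f (mulIns (mulIns g a.1) a.2))
  rw [← hprod]
  apply Finset.sum_ninvolution (fun a : Fin (p + 1) × Fin p =>
    if h : (a.2 : ℕ) < (a.1 : ℕ) then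
      ((⟨(a.2 : ℕ), by have := a.2.isLt; omega⟩ : Fin (p+1)),
        (⟨(a.1 : ℕ) - 1, by have := a.1.isLt; have := a.2.isLt; omega⟩ : Fin p))
    else (a.2.succ, (⟨(a.1 : ℕ), by have := a.2.isLt; omega⟩ : Fin p)))
  · intro a
    by_cases h : (a.2 : ℕ) < (a.1 : ℕ)
    · simp only [dif_pos h]
      exact pair_cancel_lt f g a h
    · simp only [dif_neg h]
      exact pair_cancel_ge f g a h
  · intro a _ hc
    have h1a := a.1.isLt
    have h2a := a.2.isLt
    have := congrArg (fun x => (x.1 : ℕ)) hc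
    split_ifs at this <;> simp only [Fin.val_succ] at this <;> omega
  · intro a; exact Finset.mem_univ _
  · intro a
    have h1a := a.1.isLt
    have h2a := a.2.isLt
    by_cases h : (a.2 : ℕ) < (a.1 : ℕ)
    · simp only [dif_pos h]
      rw [dif_neg (by show ¬ ((((⟨(a.1 : ℕ) - 1, by omega⟩ : Fin p)) : ℕ) < ((⟨(a.2 : ℕ), by omega⟩ : Fin (p+1)) : ℕ)); simp only [Fin.val_mk]; omega)]
      ext <;> (try simp only [Fin.val_succ, Fin.val_mk]) <;> omega
    · simp only [dif_neg h]
      rw [dif_pos (by show (((⟨(a.1 : ℕ), by omega⟩ : Fin p)) : ℕ) < ((a.2.succ : Fin (p+1)) : ℕ); simp only [Fin.val_mk, Fin.val_succ]; omega)]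
      ext <;> (try simp only [Fin.val_succ, Fin.val_mk]) <;> omega

end GdGd

section GdGd2
variable {G : Type*} [Group G] {A : Type*} [AddCommGroup A] [Module ℝ A]

lemma gd_gd (act : G → A →ₗ[ℝ] A)
    (hmul : ∀ g h a, act (g * h) a = act h (act g a)) {p : ℕ}
    (f : (Fin p → G) → A) : gd act (gd act f) = 0 := by
  funext g
  show _ = (0:A)
  simp only [gd, map_add, map_smul, map_sum, smul_add, Finset.smul_sum, smul_smul]
  have h1 : Fin.tail g (Fin.last p) = g (Fin.last (p + 1)) := by
    simp [Fin.tail, Fin.succ_last]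
  have h2 : Fin.init (Fin.tail g) = Fin.tail (Fin.init g) := by
    funext k; exact congrArg g (Fin.ext rfl)
  have h3 : Fin.init g (Fin.last p) = g ((Fin.last p).castSucc) := rfl
  rw [h1, h2, h3]
  simp only [Finset.sum_add_distrib]
  have hB1 : (∑ i : Fin (p + 1), (-1:ℝ) ^ ((i:ℕ) + 1) • f (Fin.tail (mulIns g i)))
      = -(f (Fin.tail (Fin.tail g)))
        + -∑ j : Fin p, (-1:ℝ) ^ ((j:ℕ) + 1) • f (mulIns (Fin.tail g) j) := by
    rw [Fin.sum_univ_succ, tail_mulIns_zero]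
    congr 1
    · simp
    · rw [← Finset.sum_neg_distrib]
      apply Finset.sum_congr rfl
      intro k _
      rw [tail_mulIns_succ]
      simp only [Fin.val_succ]
      rw [pow_succ ((-1:ℝ)) ((k:ℕ)+1)]
      rw [mul_neg_one, neg_smul]
  have hB3 : (∑ i : Fin (p + 1), ((-1:ℝ) ^ ((i:ℕ) + 1) * (-1) ^ (p + 1)) •
        act (mulIns g i (Fin.last p)) (f (Fin.init (mulIns g i))))
      = -(∑ j : Fin p, ((-1:ℝ) ^ (p + 1 + 1) * (-1) ^ ((j:ℕ) + 1)) •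
            act (g (Fin.last (p + 1))) (f (mulIns (Fin.init g) j)))
        + act (g ((Fin.last p).castSucc) * g (Fin.last (p + 1))) (f (Fin.init (Fin.init g))) := by
    rw [Fin.sum_univ_castSucc]
    congr 1
    · rw [← Finset.sum_neg_distrib]
      apply Finset.sum_congr rfl
      intro k _
      rw [mulIns_castSucc_last, init_mulIns_castSucc]
      have hco : ((-1:ℝ) ^ (((k.castSucc : Fin (p+1)) : ℕ) + 1) * (-1) ^ (p + 1))
          = -((-1:ℝ) ^ (p + 1 + 1) * (-1) ^ ((k:ℕ) + 1)) := by
        simp only [Fin.coe_castSucc]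
        rw [pow_succ ((-1:ℝ)) (p+1)]
        ring
      rw [hco, neg_smul]
    · rw [mulIns_last_last, init_mulIns_last]
      have hco : ((-1:ℝ) ^ (((Fin.last p : Fin (p+1)) : ℕ) + 1) * (-1) ^ (p + 1)) = 1 := by
        simp only [Fin.val_last]
        rw [← pow_add, negpow_congr (b := 0) (by omega)]
        norm_num
      rw [hco, one_smul]
  have hC3 : (((-1:ℝ) ^ (p + 1 + 1) * (-1) ^ (p + 1)) •
        act (g (Fin.last (p + 1))) (act (g ((Fin.last p).castSucc)) (f (Fin.init (Fin.init g)))))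
      = -(act (g ((Fin.last p).castSucc) * g (Fin.last (p + 1))) (f (Fin.init (Fin.init g)))) := by
    rw [hmul]
    have hco : ((-1:ℝ) ^ (p + 1 + 1) * (-1) ^ (p + 1)) = -1 := by
      rw [← pow_add, negpow_congr (b := 1) (by omega)]
      norm_num
    rw [hco, neg_one_smul]
  have hC1 : (((-1:ℝ) ^ (p + 1 + 1)) •
        act (g (Fin.last (p + 1))) (f (Fin.tail (Fin.init g))))
      = -(((-1:ℝ) ^ (p + 1)) • act (g (Fin.last (p + 1))) (f (Fin.tail (Fin.init g)))) := by
    rw [pow_succ, mul_neg_one, neg_smul]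
  rw [hB1, hB3, hC3, hC1, sum_mulIns_mulIns_eq_zero f g]
  abel

end GdGd2

section MoreGd
variable {G : Type*} [Group G] {A B : Type*} [AddCommGroup A] [Module ℝ A]
  [AddCommGroup B] [Module ℝ B]

lemma gd_add (act : G → A →ₗ[ℝ] A) {p : ℕ} (f g : (Fin p → G) → A) :
    gd act (fun gs => f gs + g gs) = fun gs => gd act f gs + gd act g gs := by
  funext x
  simp only [gd, map_add, smul_add, Finset.sum_add_distrib]
  abel

lemma gd_sub (act : G → A →ₗ[ℝ] A) {p : ℕ} (f g : (Fin p → G) → A) :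
    gd act (fun gs => f gs - g gs) = fun gs => gd act f gs - gd act g gs := by
  funext x
  simp only [gd, map_sub, smul_sub, Finset.sum_sub_distrib]
  abel

lemma gd_neg (act : G → A →ₗ[ℝ] A) {p : ℕ} (f : (Fin p → G) → A) :
    gd act (fun gs => -(f gs)) = fun gs => -(gd act f gs) := by
  funext x
  simp only [gd, map_neg, smul_neg, Finset.sum_neg_distrib]
  abel

lemma gd_smul (act : G → A →ₗ[ℝ] A) (r : ℝ) {p : ℕ} (f : (Fin p → G) → A) :
    gd act (fun gs => r • f gs) = fun gs => r • gd act f gs := by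
  funext x
  simp only [gd, map_smul, smul_add, Finset.smul_sum, smul_comm r]

lemma gd_comp (actA : G → A →ₗ[ℝ] A) (actB : G → B →ₗ[ℝ] B) (T : A →ₗ[ℝ] B)
    (hT : ∀ g a, T (actA g a) = actB g (T a)) {p : ℕ} (f : (Fin p → G) → A) :
    gd actB (fun gs => T (f gs)) = fun gs => T (gd actA f gs) := by
  funext x
  simp only [gd, map_add, map_smul, map_sum, hT]

end MoreGd

section TrLemmas
variable {A : ℤ → Type*} [∀ q, AddCommGroup (A q)] [∀ q, Module ℝ (A q)]

lemma tr_tr {q q' q'' : ℤ} (h1 : q = q') (h2 : q' = q'') (a : A q) :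
    tr (A := A) h2 (tr h1 a) = tr (h1.trans h2) a := by subst h1; subst h2; rfl

lemma tr_add {q q' : ℤ} (h : q = q') (a b : A q) :
    tr (A := A) h (a + b) = tr h a + tr h b := by subst h; rfl

lemma tr_sub {q q' : ℤ} (h : q = q') (a b : A q) :
    tr (A := A) h (a - b) = tr h a - tr h b := by subst h; rfl

lemma tr_neg {q q' : ℤ} (h : q = q') (a : A q) :
    tr (A := A) h (-a) = -(tr h a) := by subst h; rfl

lemma tr_smul {q q' : ℤ} (h : q = q') (r : ℝ) (a : A q) :
    tr (A := A) h (r • a) = r • tr h a := by subst h; rfl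

lemma tr_zero {q q' : ℤ} (h : q = q') : tr (A := A) h (0 : A q) = 0 := by subst h; rfl

lemma tr_eq_zero_iff {q q' : ℤ} (h : q = q') (a : A q) :
    tr (A := A) h a = 0 ↔ a = 0 := by subst h; exact Iff.rfl

lemma d_tr (d : ∀ q, A q →ₗ[ℝ] A (q + 1)) {q q' : ℤ} (h : q = q') (h2 : q + 1 = q' + 1)
    (a : A q) : d q' (tr (A := A) h a) = tr h2 (d q a) := by subst h; rfl

lemma gd_tr {G : Type*} [Group G] (act : ∀ q, G → A q →ₗ[ℝ] A q) {q q' : ℤ} (h : q = q')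
    {p : ℕ} (f : (Fin p → G) → A q) :
    gd (act q') (fun gs => tr (A := A) h (f gs)) = fun gs => tr h (gd (act q) f gs) := by
  subst h; rfl

end TrLemmas

lemma pi_sum_closed {α β H : Type*} [AddCommGroup α] [Module ℝ α] [AddCommGroup β] [Module ℝ β]
    [AddCommMonoid H]
    (d : α →ₗ[ℝ] β) (π : α → H)
    (hadd : ∀ a b, d a = 0 → d b = 0 → π (a + b) = π a + π b)
    (h0 : π 0 = 0) :
    ∀ (n : ℕ) (f : Fin n → α), (∀ i, d (f i) = 0) → π (∑ i, f i) = ∑ i, π (f i) := by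
  intro n
  induction n with
  | zero => intro f _; simpa using h0
  | succ n ih =>
    intro f hf
    rw [Fin.sum_univ_succ, Fin.sum_univ_succ]
    rw [hadd _ _ (hf 0) (by rw [map_sum]; exact Finset.sum_eq_zero fun i _ => hf _)]
    rw [ih _ (fun i => hf i.succ)]


/-- Two sequences `φ`, `φ̄` as in the construction give cochains
`δ'φ_p`, `δ'φ̄_p` differing by `δ'χ` for some cochain `χ` with closed values; hence the
induced `(p+1)`-cocycles on `G` with values in the `G`-module
`H^{m−p−1}(A) = ker d / im d` (obtained by composing with the projection `π` onto
cohomology) are cocycles and are cohomologous: `π∘δ'φ̄_p − π∘δ'φ_p = D(π∘χ)`. -/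
theorem statement2 {G : Type*} [Group G] {A : ℤ → Type*}
    [∀ q, AddCommGroup (A q)] [∀ q, Module ℝ (A q)]
    (d : ∀ q, A q →ₗ[ℝ] A (q + 1))
    (act : ∀ q, G → A q →ₗ[ℝ] A q)
    (hdd : ∀ (q : ℤ) (a : A q), d (q + 1) (d q a) = 0)
    (hact_one : ∀ q : ℤ, act q 1 = LinearMap.id)
    (hact_mul : ∀ (q : ℤ) (g h : G) (a : A q), act q (g * h) a = act q h (act q g a))
    (hcomm : ∀ (q : ℤ) (g : G) (a : A q), d q (act q g a) = act (q + 1) g (d q a))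
    (m : ℤ) (p : ℕ) (hp : 1 ≤ p) (hpm : (p : ℤ) ≤ m - 1)
    (ω : A m)
    (hωinv : ∀ g : G, act m g ω = ω)
    (hωexact : ∃ η : A (m - 1), tr (by omega) (d (m - 1) η) = ω)
    (hexact : ∀ q : ℤ, m - p ≤ q → q ≤ m - 1 → ∀ a : A q, d q a = 0 →
        ∃ b : A (q - 1), tr (by omega) (d (q - 1) b) = a)
    -- the two sequences of cochains
    (φ φ' : ∀ i : ℕ, (Fin i → G) → A (m - i - 1))
    (hφ0 : ω = - tr (by omega) (d (m - (0 : ℕ) - 1) (φ 0 ![])))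
    (hφ0' : ω = - tr (by omega) (d (m - (0 : ℕ) - 1) (φ' 0 ![])))
    (hφ : ∀ i : ℕ, i + 1 ≤ p →
        gd (act (m - i - 1)) (φ i)
          + (fun gs => tr (by omega) (gdd d (φ (i + 1)) gs)) = 0)
    (hφ' : ∀ i : ℕ, i + 1 ≤ p →
        gd (act (m - i - 1)) (φ' i)
          + (fun gs => tr (by omega) (gdd d (φ' (i + 1)) gs)) = 0)
    -- `H` is the cohomology `H^{m-p-1}(A)` as a right `G`-module, and
    -- `π` is the projection of the closed elements of `A^{m-p-1}` onto it
    (H : Type*) [AddCommGroup H] [Module ℝ H]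
    (ρ : G → H →ₗ[ℝ] H)
    (hρ_one : ρ 1 = LinearMap.id)
    (hρ_mul : ∀ (g h : G) (x : H), ρ (g * h) x = ρ h (ρ g x))
    (π : A (m - p - 1) → H)
    (hπ_add : ∀ a b : A (m - p - 1), d (m - p - 1) a = 0 → d (m - p - 1) b = 0 →
        π (a + b) = π a + π b)
    (hπ_smul : ∀ (r : ℝ) (a : A (m - p - 1)), d (m - p - 1) a = 0 →
        π (r • a) = r • π a)
    (hπ_surj : ∀ x : H, ∃ a : A (m - p - 1), d (m - p - 1) a = 0 ∧ π a = x)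
    (hπ_ker : ∀ a : A (m - p - 1), d (m - p - 1) a = 0 →
        (π a = 0 ↔ ∃ b : A (m - p - 2), tr (by omega) (d (m - p - 2) b) = a))
    (hπ_equiv : ∀ (g : G) (a : A (m - p - 1)), d (m - p - 1) a = 0 →
        π (act (m - p - 1) g a) = ρ g (π a)) :
    ∃ χ : (Fin p → G) → A (m - p - 1),
      -- all values of χ are closed
      (∀ gs : Fin p → G, d (m - p - 1) (χ gs) = 0)
      -- δ'φ̄_p = δ'φ_p + δ'χ
      ∧ gd (act (m - p - 1)) (φ' p)
          = gd (act (m - p - 1)) (φ p) + gd (act (m - p - 1)) χ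
      -- π∘δ'φ_p and π∘δ'φ̄_p are (p+1)-cocycles with values in H^{m-p-1}(A)
      ∧ gd ρ (fun gs => π (gd (act (m - p - 1)) (φ p) gs)) = 0
      ∧ gd ρ (fun gs => π (gd (act (m - p - 1)) (φ' p) gs)) = 0
      -- and they are cohomologous: π∘δ'φ̄_p − π∘δ'φ_p = D(π∘χ)
      ∧ (fun gs => π (gd (act (m - p - 1)) (φ' p) gs))
          = (fun gs => π (gd (act (m - p - 1)) (φ p) gs)) + gd ρ (fun gs => π (χ gs)) := by
  obtain ⟨p', rfl⟩ : ∃ p', p = p' + 1 := ⟨p - 1, by omega⟩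
  -- closedness of ψ₀
  have hψ0 : d (m - ((0:ℕ):ℤ) - 1) (φ' 0 ![] - φ 0 ![]) = 0 := by
    have h3 : tr (by omega : (m - ((0:ℕ):ℤ) - 1) + 1 = m) (d _ (φ 0 ![]))
        = tr (by omega) (d _ (φ' 0 ![])) := neg_inj.mp (hφ0.symm.trans hφ0')
    have h4 : tr (by omega : (m - ((0:ℕ):ℤ) - 1) + 1 = m)
        (d _ (φ 0 ![]) - d _ (φ' 0 ![])) = 0 := by
      rw [tr_sub, h3, sub_self]
    have h5 := (tr_eq_zero_iff _ _).mp h4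
    rw [map_sub, sub_eq_zero]
    rw [sub_eq_zero] at h5
    exact h5.symm
  -- the inductive construction of τ
  have hθcgen : ∀ i : ℕ, i + 1 ≤ p' + 1 → ∀ τ : (Fin i → G) → A (m - i - 2),
      (gd (act (m - i - 1)) (fun gs => φ' i gs - φ i gs)
        = gd (act (m - i - 1)) (fun gs =>
            tr (show (m - (i:ℤ) - 2) + 1 = m - (i:ℤ) - 1 by omega)
              (d (m - i - 2) (τ gs)))) →
      ∀ gs : Fin (i+1) → G,
        d (m - ((i+1:ℕ):ℤ) - 1)
          ((φ' (i+1) gs - φ (i+1) gs) -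
            (-1:ℝ)^i • tr (show m - (i:ℤ) - 2 = m - ((i+1:ℕ):ℤ) - 1 by push_cast; omega)
              (gd (act (m - i - 2)) τ gs)) = 0 := by
    intro i hle τ hτ
    -- σ computed
    have hσ : gd (act (m - i - 1)) (fun gs =>
          tr (show (m - (i:ℤ) - 2) + 1 = m - (i:ℤ) - 1 by omega)
            (d (m - i - 2) (τ gs)))
        = fun gs => tr (show (m - (i:ℤ) - 2) + 1 = m - (i:ℤ) - 1 by omega)
            (d (m - i - 2) (gd (act (m - i - 2)) τ gs)) := by
      rw [gd_tr act (show (m - (i:ℤ) - 2) + 1 = m - (i:ℤ) - 1 by omega)]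
      have hcmp := gd_comp (act (m - i - 2)) (act ((m - (i:ℤ) - 2) + 1)) (d (m - i - 2))
        (fun g a => hcomm _ g a) τ
      rw [hcmp]
    have hrel1 := hφ i hle
    have hrel2 := hφ' i hle
    -- key pointwise relation
    have hkey : ∀ gs : Fin (i+1) → G,
        tr (show (m - ((i+1:ℕ):ℤ) - 1) + 1 = m - (i:ℤ) - 1 by push_cast; omega)
            ((-1:ℝ)^(i+1) • d (m - ((i+1:ℕ):ℤ) - 1) (φ' (i+1) gs - φ (i+1) gs))
          = - tr (show (m - (i:ℤ) - 2) + 1 = m - (i:ℤ) - 1 by omega)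
              (d (m - i - 2) (gd (act (m - i - 2)) τ gs)) := by
      intro gs
      have c1 := congrFun hrel1 gs
      have c2 := congrFun hrel2 gs
      simp only [Pi.add_apply, Pi.zero_apply, gdd] at c1 c2
      have c3 := congrFun hτ gs
      rw [congrFun hσ gs] at c3
      rw [congrFun (gd_sub (act (m - i - 1)) (φ' i) (φ i)) gs] at c3
      have e1 : tr (show (m - ((i+1:ℕ):ℤ) - 1) + 1 = m - (i:ℤ) - 1 by push_cast; omega)
          ((-1:ℝ)^(i+1) • d (m - ((i+1:ℕ):ℤ) - 1) (φ (i+1) gs))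
          = - gd (act (m - i - 1)) (φ i) gs := eq_neg_of_add_eq_zero_right c1
      have e2 : tr (show (m - ((i+1:ℕ):ℤ) - 1) + 1 = m - (i:ℤ) - 1 by push_cast; omega)
          ((-1:ℝ)^(i+1) • d (m - ((i+1:ℕ):ℤ) - 1) (φ' (i+1) gs))
          = - gd (act (m - i - 1)) (φ' i) gs := eq_neg_of_add_eq_zero_right c2
      calc tr (show (m - ((i+1:ℕ):ℤ) - 1) + 1 = m - (i:ℤ) - 1 by push_cast; omega)
            ((-1:ℝ)^(i+1) • d (m - ((i+1:ℕ):ℤ) - 1) (φ' (i+1) gs - φ (i+1) gs))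
          = tr (show (m - ((i+1:ℕ):ℤ) - 1) + 1 = m - (i:ℤ) - 1 by push_cast; omega)
              ((-1:ℝ)^(i+1) • d (m - ((i+1:ℕ):ℤ) - 1) (φ' (i+1) gs))
            - tr (show (m - ((i+1:ℕ):ℤ) - 1) + 1 = m - (i:ℤ) - 1 by push_cast; omega)
              ((-1:ℝ)^(i+1) • d (m - ((i+1:ℕ):ℤ) - 1) (φ (i+1) gs)) := by
            rw [map_sub, smul_sub, tr_sub]
        _ = (- gd (act (m - i - 1)) (φ' i) gs) - (- gd (act (m - i - 1)) (φ i) gs) := by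
            rw [e1, e2]
        _ = - (gd (act (m - i - 1)) (φ' i) gs - gd (act (m - i - 1)) (φ i) gs) := by abel
        _ = - tr (show (m - (i:ℤ) - 2) + 1 = m - (i:ℤ) - 1 by omega)
              (d (m - i - 2) (gd (act (m - i - 2)) τ gs)) := by rw [← c3]
    -- closedness of θ
    have hθc : ∀ gs : Fin (i+1) → G,
        d (m - ((i+1:ℕ):ℤ) - 1)
          ((φ' (i+1) gs - φ (i+1) gs) -
            (-1:ℝ)^i • tr (show m - (i:ℤ) - 2 = m - ((i+1:ℕ):ℤ) - 1 by push_cast; omega)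
              (gd (act (m - i - 2)) τ gs)) = 0 := by
      intro gs
      rw [map_sub, map_smul]
      rw [d_tr d _ (show (m - (i:ℤ) - 2) + 1 = (m - ((i+1:ℕ):ℤ) - 1) + 1 by push_cast; omega)]
      rw [← tr_eq_zero_iff
        (show (m - ((i+1:ℕ):ℤ) - 1) + 1 = m - (i:ℤ) - 1 by push_cast; omega)]
      rw [tr_sub, tr_smul, tr_tr]
      have hk := hkey gs
      rw [tr_smul] at hk
      have hsq : ∀ v : A (m - (i:ℤ) - 1), ((-1:ℝ)^(i+1)) • ((-1:ℝ)^(i+1)) • v = v := by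
        intro v
        rw [smul_smul, ← pow_add, negpow_congr (b := 0) (by omega), pow_zero, one_smul]
      have e3 : tr (show (m - ((i+1:ℕ):ℤ) - 1) + 1 = m - (i:ℤ) - 1 by push_cast; omega)
          (d (m - ((i+1:ℕ):ℤ) - 1) (φ' (i+1) gs - φ (i+1) gs))
          = ((-1:ℝ)^(i+1)) • (- tr (show (m - (i:ℤ) - 2) + 1 = m - (i:ℤ) - 1 by omega)
              (d (m - i - 2) (gd (act (m - i - 2)) τ gs))) := by
        rw [← hk, hsq]
      rw [e3]
      have hYY : tr (((show (m - (i:ℤ) - 2) + 1 = (m - ((i+1:ℕ):ℤ) - 1) + 1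
            by push_cast; omega)).trans
            (show (m - ((i+1:ℕ):ℤ) - 1) + 1 = m - (i:ℤ) - 1 by push_cast; omega))
          (d (m - i - 2) (gd (act (m - i - 2)) τ gs))
          = tr (show (m - (i:ℤ) - 2) + 1 = m - (i:ℤ) - 1 by omega)
            (d (m - i - 2) (gd (act (m - i - 2)) τ gs)) := rfl
      rw [hYY]
      match_scalars
      ring
    exact hθc
  have key : ∀ i : ℕ, i ≤ p' → ∃ τ : (Fin i → G) → A (m - i - 2),
      gd (act (m - i - 1)) (fun gs => φ' i gs - φ i gs)
        = gd (act (m - i - 1)) (fun gs =>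
            tr (show (m - (i:ℤ) - 2) + 1 = m - (i:ℤ) - 1 by omega)
              (d (m - i - 2) (τ gs))) := by
    intro i
    induction i with
    | zero =>
      intro _
      obtain ⟨b, hb⟩ := hexact (m - ((0:ℕ):ℤ) - 1) (by push_cast; omega)
        (by push_cast; omega) (φ' 0 ![] - φ 0 ![]) hψ0
      refine ⟨fun _ => tr (show m - ((0:ℕ):ℤ) - 1 - 1 = m - ((0:ℕ):ℤ) - 2 by omega) b, ?_⟩
      have harg : (fun gs : Fin 0 → G => φ' 0 gs - φ 0 gs)
          = fun gs : Fin 0 → G =>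
              tr (show (m - ((0:ℕ):ℤ) - 2) + 1 = m - ((0:ℕ):ℤ) - 1 by omega)
                (d (m - ((0:ℕ):ℤ) - 2)
                  (tr (show m - ((0:ℕ):ℤ) - 1 - 1 = m - ((0:ℕ):ℤ) - 2 by omega) b)) := by
        funext gs
        have hgs : gs = ![] := Subsingleton.elim _ _
        rw [hgs, d_tr d _ (show (m - ((0:ℕ):ℤ) - 1 - 1) + 1 = (m - ((0:ℕ):ℤ) - 2) + 1 by omega),
          tr_tr]
        exact hb.symm
      exact congrArg _ harg
    | succ i IH =>
      intro hle
      obtain ⟨τ, hτ⟩ := IH (by omega)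
      have hθc := hθcgen i (by omega) τ hτ
      -- choose the primitives
      have hex : ∀ gs : Fin (i+1) → G, ∃ b : A (m - ((i+1:ℕ):ℤ) - 1 - 1),
          tr (show (m - ((i+1:ℕ):ℤ) - 1 - 1) + 1 = m - ((i+1:ℕ):ℤ) - 1 by omega)
            (d (m - ((i+1:ℕ):ℤ) - 1 - 1) b)
          = (φ' (i+1) gs - φ (i+1) gs) -
              (-1:ℝ)^i • tr (show m - (i:ℤ) - 2 = m - ((i+1:ℕ):ℤ) - 1 by push_cast; omega)
                (gd (act (m - i - 2)) τ gs) := by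
        intro gs
        exact hexact (m - ((i+1:ℕ):ℤ) - 1) (by push_cast; omega) (by push_cast; omega)
          _ (hθc gs)
      choose b hb using hex
      refine ⟨fun gs => tr (show m - ((i+1:ℕ):ℤ) - 1 - 1 = m - ((i+1:ℕ):ℤ) - 2 by omega)
        (b gs), ?_⟩
      have hτ'eq : (fun gs : Fin (i+1) → G =>
            tr (show (m - ((i+1:ℕ):ℤ) - 2) + 1 = m - ((i+1:ℕ):ℤ) - 1 by omega)
              (d (m - ((i+1:ℕ):ℤ) - 2)
                (tr (show m - ((i+1:ℕ):ℤ) - 1 - 1 = m - ((i+1:ℕ):ℤ) - 2 by omega) (b gs))))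
          = fun gs => (φ' (i+1) gs - φ (i+1) gs) -
              (-1:ℝ)^i • tr (show m - (i:ℤ) - 2 = m - ((i+1:ℕ):ℤ) - 1 by push_cast; omega)
                (gd (act (m - i - 2)) τ gs) := by
        funext gs
        rw [d_tr d _ (show (m - ((i+1:ℕ):ℤ) - 1 - 1) + 1 = (m - ((i+1:ℕ):ℤ) - 2) + 1 by omega),
          tr_tr]
        exact hb gs
      have h0 : gd (act (m - ((i+1:ℕ):ℤ) - 1)) (fun gs : Fin (i+1) → G =>
            (-1:ℝ)^i • tr (show m - (i:ℤ) - 2 = m - ((i+1:ℕ):ℤ) - 1 by push_cast; omega)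
              (gd (act (m - i - 2)) τ gs)) = fun _ => 0 := by
        rw [gd_smul, gd_tr]
        have hg := gd_gd (act (m - (i:ℤ) - 2)) (fun g h a => hact_mul _ g h a) τ
        rw [hg]
        funext gs
        simp only [Pi.zero_apply, tr_zero, smul_zero]
      calc gd (act (m - ((i+1:ℕ):ℤ) - 1)) (fun gs => φ' (i+1) gs - φ (i+1) gs)
          = gd (act (m - ((i+1:ℕ):ℤ) - 1)) (fun gs =>
              (φ' (i+1) gs - φ (i+1) gs) -
                (-1:ℝ)^i • tr (show m - (i:ℤ) - 2 = m - ((i+1:ℕ):ℤ) - 1 by push_cast; omega)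
                  (gd (act (m - i - 2)) τ gs)) := by
            rw [gd_sub (act (m - ((i+1:ℕ):ℤ) - 1)) (fun gs => φ' (i+1) gs - φ (i+1) gs), h0]
            funext gs
            simp
        _ = _ := (congrArg _ hτ'eq).symm
  -- ===== final construction =====
  obtain ⟨τ, hτ⟩ := key p' (le_refl _)
  have hθc := hθcgen p' (le_refl _) τ hτ
  -- χ
  set χ : (Fin (p' + 1) → G) → A (m - ((p'+1:ℕ):ℤ) - 1) := fun gs =>
    (φ' (p'+1) gs - φ (p'+1) gs) -
      (-1:ℝ)^p' • tr (show m - (p':ℤ) - 2 = m - ((p'+1:ℕ):ℤ) - 1 by push_cast; omega)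
        (gd (act (m - p' - 2)) τ gs) with hχdef
  have hχc : ∀ gs : Fin (p' + 1) → G, d (m - ((p'+1:ℕ):ℤ) - 1) (χ gs) = 0 := hθc
  -- gd χ = gd φ' - gd φ
  have h0f : gd (act (m - ((p'+1:ℕ):ℤ) - 1)) (fun gs : Fin (p'+1) → G =>
        (-1:ℝ)^p' • tr (show m - (p':ℤ) - 2 = m - ((p'+1:ℕ):ℤ) - 1 by push_cast; omega)
          (gd (act (m - p' - 2)) τ gs)) = fun _ => 0 := by
    rw [gd_smul, gd_tr]
    have hg := gd_gd (act (m - (p':ℤ) - 2)) (fun g h a => hact_mul _ g h a) τ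
    rw [hg]
    funext gs
    simp only [Pi.zero_apply, tr_zero, smul_zero]
  have hgdχ : gd (act (m - ((p'+1:ℕ):ℤ) - 1)) χ
      = fun gs => gd (act (m - ((p'+1:ℕ):ℤ) - 1)) (φ' (p'+1)) gs
          - gd (act (m - ((p'+1:ℕ):ℤ) - 1)) (φ (p'+1)) gs := by
    rw [hχdef]
    rw [gd_sub (act (m - ((p'+1:ℕ):ℤ) - 1)) (fun gs => φ' (p'+1) gs - φ (p'+1) gs), h0f]
    funext gs
    rw [congrFun (gd_sub (act (m - ((p'+1:ℕ):ℤ) - 1)) (φ' (p'+1)) (φ (p'+1))) gs]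
    simp
  have hgoal2 : gd (act (m - ((p'+1:ℕ):ℤ) - 1)) (φ' (p'+1))
      = gd (act (m - ((p'+1:ℕ):ℤ) - 1)) (φ (p'+1)) + gd (act (m - ((p'+1:ℕ):ℤ) - 1)) χ := by
    funext gs
    rw [Pi.add_apply, congrFun hgdχ gs]
    abel
  -- closedness of the values of gd φ_p, gd φ'_p
  have hL : ∀ c : ∀ i : ℕ, (Fin i → G) → A (m - i - 1),
      gd (act (m - (p':ℤ) - 1)) (fun gs : Fin (p'+1) → G =>
        tr (show (m - ((p'+1:ℕ):ℤ) - 1) + 1 = m - (p':ℤ) - 1 by push_cast; omega)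
          ((-1:ℝ)^(p'+1) • d (m - ((p'+1:ℕ):ℤ) - 1) (c (p'+1) gs)))
      = fun gs => tr (show (m - ((p'+1:ℕ):ℤ) - 1) + 1 = m - (p':ℤ) - 1 by push_cast; omega)
          ((-1:ℝ)^(p'+1) • d (m - ((p'+1:ℕ):ℤ) - 1)
            (gd (act (m - ((p'+1:ℕ):ℤ) - 1)) (c (p'+1)) gs)) := by
    intro c
    rw [gd_tr act (show (m - ((p'+1:ℕ):ℤ) - 1) + 1 = m - (p':ℤ) - 1 by push_cast; omega)]
    have step1 : gd (act ((m - ((p'+1:ℕ):ℤ) - 1) + 1))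
        (fun gs : Fin (p'+1) → G => (-1:ℝ)^(p'+1) • d (m - ((p'+1:ℕ):ℤ) - 1) (c (p'+1) gs))
        = fun gs => (-1:ℝ)^(p'+1) • d (m - ((p'+1:ℕ):ℤ) - 1)
            (gd (act (m - ((p'+1:ℕ):ℤ) - 1)) (c (p'+1)) gs) := by
      rw [gd_smul, gd_comp (act (m - ((p'+1:ℕ):ℤ) - 1)) (act ((m - ((p'+1:ℕ):ℤ) - 1) + 1))
        (d (m - ((p'+1:ℕ):ℤ) - 1)) (fun g a => hcomm _ g a)]
    rw [step1]
  have hclosed : ∀ (c : ∀ i : ℕ, (Fin i → G) → A (m - i - 1)),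
      (∀ i : ℕ, i + 1 ≤ p' + 1 →
        gd (act (m - i - 1)) (c i)
          + (fun gs => tr (by omega) (gdd d (c (i + 1)) gs)) = 0) →
      ∀ gs : Fin (p'+2) → G,
        d (m - ((p'+1:ℕ):ℤ) - 1) (gd (act (m - ((p'+1:ℕ):ℤ) - 1)) (c (p'+1)) gs) = 0 := by
    intro c hc gs
    have hrelp := hc p' (le_refl _)
    have hY : (fun gs : Fin (p'+1) → G =>
        tr (show (m - ((p'+1:ℕ):ℤ) - 1) + 1 = m - (p':ℤ) - 1 by push_cast; omega)
          ((-1:ℝ)^(p'+1) • d (m - ((p'+1:ℕ):ℤ) - 1) (c (p'+1) gs)))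
        = fun gs => - gd (act (m - (p':ℤ) - 1)) (c p') gs := by
      funext gs'
      have hpt := congrFun hrelp gs'
      simp only [Pi.add_apply, Pi.zero_apply, gdd] at hpt
      exact eq_neg_of_add_eq_zero_right hpt
    have hR : gd (act (m - (p':ℤ) - 1)) (fun gs : Fin (p'+1) → G =>
        - gd (act (m - (p':ℤ) - 1)) (c p') gs) = fun _ => 0 := by
      rw [gd_neg]
      have := gd_gd (act (m - (p':ℤ) - 1)) (fun g h a => hact_mul _ g h a) (c p')
      rw [this]
      funext gs'
      simp
    have hcombo : (fun gs : Fin (p'+2) → G =>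
        tr (show (m - ((p'+1:ℕ):ℤ) - 1) + 1 = m - (p':ℤ) - 1 by push_cast; omega)
          ((-1:ℝ)^(p'+1) • d (m - ((p'+1:ℕ):ℤ) - 1)
            (gd (act (m - ((p'+1:ℕ):ℤ) - 1)) (c (p'+1)) gs))) = fun _ => 0 := by
      rw [← hL c, hY, hR]
    have h2 := congrFun hcombo gs
    rw [tr_eq_zero_iff] at h2
    rcases smul_eq_zero.mp h2 with h3 | h3
    · exact absurd h3 (pow_ne_zero _ (by norm_num))
    · exact h3
  have hdδφ := hclosed φ hφ
  have hdδφ' := hclosed φ' hφ'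
  have hdδχ : ∀ gs : Fin (p'+2) → G,
      d (m - ((p'+1:ℕ):ℤ) - 1) (gd (act (m - ((p'+1:ℕ):ℤ) - 1)) χ gs) = 0 := by
    intro gs
    rw [congrFun hgdχ gs, map_sub, hdδφ' gs, hdδφ gs, sub_zero]
  -- π machinery
  have hπ0 : π (0 : A (m - ((p'+1:ℕ):ℤ) - 1)) = 0 := by
    have h := hπ_smul 0 0 (map_zero _)
    simpa using h
  have picompat : ∀ {n : ℕ} (c : (Fin n → G) → A (m - ((p'+1:ℕ):ℤ) - 1)),
      (∀ gs, d (m - ((p'+1:ℕ):ℤ) - 1) (c gs) = 0) →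
      (fun gs => π (gd (act (m - ((p'+1:ℕ):ℤ) - 1)) c gs)) = gd ρ (fun gs => π (c gs)) := by
    intro n c hc
    funext gs
    simp only [gd]
    have hd2 : ∀ i : Fin n, d _ (((-1:ℝ)^((i:ℕ)+1)) • c (mulIns gs i)) = 0 := fun i => by
      rw [map_smul, hc, smul_zero]
    have hdsum : d _ (∑ i : Fin n, ((-1:ℝ)^((i:ℕ)+1)) • c (mulIns gs i)) = 0 := by
      rw [map_sum]; exact Finset.sum_eq_zero fun i _ => hd2 i
    have hdact : d _ (act (m - ((p'+1:ℕ):ℤ) - 1) (gs (Fin.last n)) (c (Fin.init gs))) = 0 := by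
      rw [hcomm, hc, map_zero]
    rw [hπ_add _ _ (by rw [map_add, hc, hdsum, add_zero])
      (by rw [map_smul, hdact, smul_zero])]
    rw [hπ_add _ _ (hc _) hdsum]
    rw [pi_sum_closed (d (m - ((p'+1:ℕ):ℤ) - 1)) π hπ_add hπ0 n _ hd2]
    rw [hπ_smul _ _ hdact, hπ_equiv _ _ (hc _)]
    congr 1
    congr 1
    apply Finset.sum_congr rfl
    intro i _
    rw [hπ_smul _ _ (hc _)]
  refine ⟨χ, hχc, hgoal2, ?_, ?_, ?_⟩
  · rw [← picompat (gd (act (m - ((p'+1:ℕ):ℤ) - 1)) (φ (p'+1))) hdδφ]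
    have := gd_gd (act (m - ((p'+1:ℕ):ℤ) - 1)) (fun g h a => hact_mul _ g h a) (φ (p'+1))
    rw [this]
    funext gs
    simpa using hπ0
  · rw [← picompat (gd (act (m - ((p'+1:ℕ):ℤ) - 1)) (φ' (p'+1))) hdδφ']
    have := gd_gd (act (m - ((p'+1:ℕ):ℤ) - 1)) (fun g h a => hact_mul _ g h a) (φ' (p'+1))
    rw [this]
    funext gs
    simpa using hπ0
  · rw [← picompat χ hχc]
    funext gs
    rw [Pi.add_apply]
    rw [congrFun hgoal2 gs, Pi.add_apply]
    exact hπ_add _ _ (hdδφ gs) (hdδχ gs)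
end

section
/- Let w be a nonzero alternating m-form on ℝⁿ. Then the m-cocycle c(a_1,…,a_m) = w(a_1,…,a_m) on the group (ℝⁿ, +) with values in the trivial module ℝ is nontrivial: there is no function b : (ℝⁿ)^{m−1} → ℝ with Db = c. Hence c defines a nonzero class in H^m((ℝⁿ,+), ℝ). -/
open scoped BigOperators

/-- Merge the `i`-th and `(i+1)`-st entries of a tuple of elements of an additive group:
the tuple `(g₁, …, g_i + g_{i+1}, …, g_{p+1})` (0-indexed). -/
def addIns {G : Type*} [Add G] {p : ℕ} (g : Fin (p + 1) → G) (i : Fin p) : Fin p → G :=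
  fun j =>
    if (j : ℕ) < (i : ℕ) then g j.castSucc
    else if (j : ℕ) = (i : ℕ) then g j.castSucc + g j.succ
    else g j.succ

/-- `D` : the group-cohomology differential on cochains of an additive group `G` with
values in the trivial `G`-module `ℝ`:
`(Df)(g₁,…,g_{p+1}) = f(g₂,…,g_{p+1}) + ∑ (-1)^i f(g₁,…,g_i + g_{i+1},…,g_{p+1})
  + (-1)^{p+1} f(g₁,…,g_p)`. -/
def DtrivA {G : Type*} [Add G] {p : ℕ} (f : (Fin p → G) → ℝ) :
    (Fin (p + 1) → G) → ℝ :=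
  fun g =>
    f (Fin.tail g)
      + ∑ i : Fin p, ((-1 : ℝ) ^ ((i : ℕ) + 1)) • f (addIns g i)
      + ((-1 : ℝ) ^ (p + 1)) • f (Fin.init g)

section aux

variable {G : Type*} [AddCommMonoid G] {p : ℕ}

def baseT (g : Fin (p + 1) → G) (i : Fin p) : Fin p → G :=
  fun j => if (j : ℕ) < (i : ℕ) then g j.castSucc else g j.succ

lemma addIns_eq (g : Fin (p + 1) → G) (i : Fin p) :
    addIns g i = Function.update (baseT g i) i (g i.castSucc + g i.succ) := by
  funext j
  rcases eq_or_ne j i with rfl | hji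
  · simp [addIns]
  · have hne : (j : ℕ) ≠ (i : ℕ) := fun h => hji (Fin.ext h)
    simp [addIns, baseT, Function.update_of_ne hji, hne]

omit [AddCommMonoid G] in
lemma drop_succ_eq (g : Fin (p + 1) → G) (i : Fin p) :
    g ∘ (Fin.succAbove i.succ) = Function.update (baseT g i) i (g i.castSucc) := by
  funext j
  simp only [Function.comp]
  rcases eq_or_ne j i with rfl | hji
  · rw [Fin.succAbove_succ_self]
    simp
  · have hne : (j : ℕ) ≠ (i : ℕ) := fun h => hji (Fin.ext h)
    rw [Function.update_of_ne hji]
    rcases lt_or_gt_of_ne hne with h | h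
    · have hlt : j.castSucc < i.succ := by
        rw [Fin.lt_def]; simpa using by omega
      rw [Fin.succAbove_of_castSucc_lt _ _ hlt]
      simp [baseT, h]
    · have hle : i.succ ≤ j.castSucc := by
        rw [Fin.le_def]; simpa using by omega
      rw [Fin.succAbove_of_le_castSucc _ _ hle]
      simp [baseT, Nat.not_lt.mpr (le_of_lt h)]

omit [AddCommMonoid G] in
lemma drop_castSucc_eq (g : Fin (p + 1) → G) (i : Fin p) :
    g ∘ (Fin.succAbove i.castSucc) = Function.update (baseT g i) i (g i.succ) := by
  funext j
  simp only [Function.comp]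
  rcases eq_or_ne j i with rfl | hji
  · rw [Fin.succAbove_castSucc_self]
    simp
  · have hne : (j : ℕ) ≠ (i : ℕ) := fun h => hji (Fin.ext h)
    rw [Function.update_of_ne hji]
    rcases lt_or_gt_of_ne hne with h | h
    · have hlt : j.castSucc < i.castSucc := by
        rw [Fin.lt_def]; simpa using by omega
      rw [Fin.succAbove_of_castSucc_lt _ _ hlt]
      simp [baseT, h]
    · have hle : i.castSucc ≤ j.castSucc := by
        rw [Fin.le_def]; simpa using by omega
      rw [Fin.succAbove_of_le_castSucc _ _ hle]
      simp [baseT, Nat.not_lt.mpr (le_of_lt h)]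

end aux

section vec

variable {V : Type*} [AddCommGroup V] [Module ℝ V]

lemma w_addIns {p : ℕ} (w : AlternatingMap ℝ V ℝ (Fin p)) (g : Fin (p + 1) → V) (i : Fin p) :
    w (addIns g i) = w (g ∘ Fin.succAbove i.succ) + w (g ∘ Fin.succAbove i.castSucc) := by
  rw [addIns_eq, drop_succ_eq, drop_castSucc_eq, AlternatingMap.map_update_add]

lemma part1 {q : ℕ} (w : AlternatingMap ℝ V ℝ (Fin (q + 1))) :
    DtrivA (fun a : Fin (q + 1) → V => w a) = 0 := by
  funext g
  set d : Fin (q + 2) → ℝ := fun j => (-1 : ℝ) ^ (j : ℕ) * w (g ∘ Fin.succAbove j) with hd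
  have hmid : ∀ i : Fin (q + 1),
      ((-1 : ℝ) ^ ((i : ℕ) + 1)) • w (addIns g i) = d i.succ - d i.castSucc := by
    intro i
    rw [w_addIns]
    simp only [hd, Fin.val_succ, Fin.coe_castSucc, smul_eq_mul]
    rw [pow_succ]
    ring
  have htail : w (Fin.tail g) = d 0 := by
    have h0 : Fin.tail g = g ∘ Fin.succAbove 0 := by
      funext j; simp [Fin.tail, Fin.zero_succAbove]
    simp [hd, h0]
  have hinit : ((-1 : ℝ) ^ (q + 1 + 1)) • w (Fin.init g) = -d (Fin.last (q + 1)) := by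
    have h0 : Fin.init g = g ∘ Fin.succAbove (Fin.last (q + 1)) := by
      funext j; simp [Fin.init, Fin.succAbove_last]
    simp only [hd, h0, Fin.val_last, smul_eq_mul]
    rw [pow_succ]
    ring
  have hsum : ∑ i : Fin (q + 1), (((-1 : ℝ) ^ ((i : ℕ) + 1)) • w (addIns g i))
      = d (Fin.last (q + 1)) - d 0 := by
    rw [Finset.sum_congr rfl (fun i _ => hmid i), Finset.sum_sub_distrib]
    have h1 : ∑ i : Fin (q + 1), d i.succ = (∑ j : Fin (q + 2), d j) - d 0 := by
      rw [Fin.sum_univ_succ d]; ring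
    have h2 : ∑ i : Fin (q + 1), d i.castSucc
        = (∑ j : Fin (q + 2), d j) - d (Fin.last (q + 1)) := by
      rw [Fin.sum_univ_castSucc d]; ring
    rw [h1, h2]; ring
  show w (Fin.tail g) + _ + _ = (0 : ℝ)
  rw [htail, hinit, hsum]
  ring

end vec

/-- (Stated with the degree of the form written as `m + 1 ≥ 1`.)
For a nonzero alternating `(m+1)`-form `w` on `ℝⁿ`, the `(m+1)`-cocycle
`c(a₁,…,a_{m+1}) = w(a₁,…,a_{m+1})` on the group `(ℝⁿ, +)` with values in the trivial
module `ℝ` is nontrivial: there is no `b : (ℝⁿ)^m → ℝ` with `Db = c`.  Hence `c` defines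
a nonzero class in `H^{m+1}((ℝⁿ,+), ℝ)`. -/
theorem statement11 (n m : ℕ) (w : AlternatingMap ℝ (Fin n → ℝ) ℝ (Fin (m + 1)))
    (hw : w ≠ 0) :
    DtrivA (fun a : Fin (m + 1) → (Fin n → ℝ) => w a) = 0
    ∧ ¬ ∃ b : (Fin m → (Fin n → ℝ)) → ℝ,
        DtrivA b = fun a : Fin (m + 1) → (Fin n → ℝ) => w a := by
  constructor
  · exact part1 w
  · rintro ⟨b, hb⟩
    obtain ⟨a, ha⟩ : ∃ a : Fin (m + 1) → (Fin n → ℝ), w a ≠ 0 := by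
      by_contra h
      push_neg at h
      exact hw (AlternatingMap.ext h)
    set ε : Equiv.Perm (Fin (m + 1)) → ℝ :=
      fun σ => ((Equiv.Perm.sign σ : ℤ) : ℝ) with hε
    have hε2 : ∀ σ, ε σ * ε σ = 1 := by
      intro σ
      simp only [hε]
      rcases Int.units_eq_one_or (Equiv.Perm.sign σ) with h | h <;> simp [h]
    have hεmul : ∀ σ τ : Equiv.Perm (Fin (m + 1)), ε (σ * τ) = ε σ * ε τ := by
      intro σ τ
      simp only [hε, Equiv.Perm.sign_mul]
      push_cast
      ring
    have key : ∑ σ : Equiv.Perm (Fin (m + 1)), ε σ * DtrivA b (a ∘ σ) = 0 := by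
      simp only [DtrivA, smul_eq_mul]
      have expand : ∀ σ : Equiv.Perm (Fin (m + 1)),
          ε σ * (b (Fin.tail (a ∘ σ))
            + ∑ i : Fin m, ((-1 : ℝ) ^ ((i : ℕ) + 1)) * b (addIns (a ∘ σ) i)
            + ((-1 : ℝ) ^ (m + 1)) * b (Fin.init (a ∘ σ)))
          = ε σ * b (Fin.tail (a ∘ σ))
            + (∑ i : Fin m, ((-1 : ℝ) ^ ((i : ℕ) + 1)) * (ε σ * b (addIns (a ∘ σ) i)))
            + ((-1 : ℝ) ^ (m + 1)) * (ε σ * b (Fin.init (a ∘ σ))) := by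
        intro σ
        rw [mul_add, mul_add, Finset.mul_sum]
        congr 1
        · congr 1
          apply Finset.sum_congr rfl; intro i _; ring
        · ring
      rw [Finset.sum_congr rfl (fun σ _ => expand σ)]
      rw [Finset.sum_add_distrib, Finset.sum_add_distrib]
      -- middle terms vanish
      have hmidv : ∀ i : Fin m,
          ∑ σ : Equiv.Perm (Fin (m + 1)), ε σ * b (addIns (a ∘ σ) i) = 0 := by
        intro i
        set τ : Equiv.Perm (Fin (m + 1)) := Equiv.swap i.castSucc i.succ with hτ
        have hτs : ∀ σ, ε (σ * τ) = -ε σ := by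
          intro σ
          rw [hεmul]
          have : ε τ = -1 := by
            simp [hε, hτ, Equiv.Perm.sign_swap (Fin.castSucc_lt_succ : i.castSucc < i.succ).ne]
          rw [this]; ring
        have haddins : ∀ σ : Equiv.Perm (Fin (m + 1)),
            addIns (a ∘ ⇑(σ * τ)) i = addIns (a ∘ ⇑σ) i := by
          intro σ
          funext j
          rcases eq_or_ne j i with rfl | hji
          · have h1 : τ j.castSucc = j.succ := Equiv.swap_apply_left _ _
            have h2 : τ j.succ = j.castSucc := Equiv.swap_apply_right _ _
            simp [addIns, Equiv.Perm.mul_apply, h1, h2, add_comm]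
          · have hne : (j : ℕ) ≠ (i : ℕ) := fun h => hji (Fin.ext h)
            rcases lt_or_gt_of_ne hne with h | h
            · have h1 : τ j.castSucc = j.castSucc := by
                apply Equiv.swap_apply_of_ne_of_ne
                · exact fun hh => by
                    have := congrArg Fin.val hh; simp at this; omega
                · exact fun hh => by
                    have := congrArg Fin.val hh; simp at this; omega
              simp [addIns, h, Equiv.Perm.mul_apply, h1]
            · have h1 : τ j.succ = j.succ := by
                apply Equiv.swap_apply_of_ne_of_ne
                · exact fun hh => by
                    have := congrArg Fin.val hh; simp at this; omega
                · exact fun hh => by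
                    have := congrArg Fin.val hh; simp at this; omega
              simp [addIns, hne, Nat.not_lt.mpr (le_of_lt h),
                Equiv.Perm.mul_apply, h1]
        have hrd := (Equiv.sum_comp (Equiv.mulRight τ)
            (fun σ => ε σ * b (addIns (a ∘ ⇑σ) i))).symm
        simp only [Equiv.coe_mulRight] at hrd
        have hneg : ∑ σ : Equiv.Perm (Fin (m + 1)), ε σ * b (addIns (a ∘ σ) i)
            = -∑ σ : Equiv.Perm (Fin (m + 1)), ε σ * b (addIns (a ∘ σ) i) := by
          nth_rewrite 1 [hrd]
          rw [← Finset.sum_neg_distrib]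
          apply Finset.sum_congr rfl
          intro σ _
          rw [haddins σ, hτs σ]
          ring
        linarith
      have hmids : ∑ σ : Equiv.Perm (Fin (m + 1)),
          (∑ i : Fin m, ((-1 : ℝ) ^ ((i : ℕ) + 1)) * (ε σ * b (addIns (a ∘ σ) i))) = 0 := by
        rw [Finset.sum_comm]
        apply Finset.sum_eq_zero
        intro i _
        rw [← Finset.mul_sum, hmidv i, mul_zero]
      set ρ : Equiv.Perm (Fin (m + 1)) := finRotate (m + 1) with hρ
      have hρinv : ∀ j : Fin m, ρ⁻¹ j.succ = j.castSucc := by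
        intro j
        rw [Equiv.Perm.inv_eq_iff_eq, hρ, finRotate_succ_apply, Fin.coeSucc_eq_succ]
      have hti : ∀ σ : Equiv.Perm (Fin (m + 1)),
          Fin.tail (a ∘ ⇑(σ * ρ⁻¹)) = Fin.init (a ∘ ⇑σ) := by
        intro σ
        funext j
        simp only [Fin.tail, Fin.init, Function.comp, Equiv.Perm.mul_apply, hρinv j]
      have hsρ : ε ρ⁻¹ = (-1 : ℝ) ^ m := by
        simp only [hε, Equiv.Perm.sign_inv, hρ, sign_finRotate]
        push_cast
        ring
      have htails : ∑ σ : Equiv.Perm (Fin (m + 1)), ε σ * b (Fin.tail (a ∘ σ))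
          = (-1 : ℝ) ^ m * ∑ σ : Equiv.Perm (Fin (m + 1)), ε σ * b (Fin.init (a ∘ σ)) := by
        rw [← Equiv.sum_comp (Equiv.mulRight ρ⁻¹)
          (fun σ => ε σ * b (Fin.tail (a ∘ σ))), Finset.mul_sum]
        apply Finset.sum_congr rfl
        intro σ _
        simp only [Equiv.coe_mulRight]
        rw [hti σ, hεmul, hsρ]
        ring
      rw [hmids, htails]
      have hlast : ∑ σ : Equiv.Perm (Fin (m + 1)),
          ((-1 : ℝ) ^ (m + 1)) * (ε σ * b (Fin.init (a ∘ σ)))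
          = -((-1 : ℝ) ^ m * ∑ σ : Equiv.Perm (Fin (m + 1)), ε σ * b (Fin.init (a ∘ σ))) := by
        rw [Finset.mul_sum, ← Finset.sum_neg_distrib]
        apply Finset.sum_congr rfl
        intro σ _
        rw [pow_succ]
        ring
      rw [hlast]
      ring
    have hval : ∀ σ : Equiv.Perm (Fin (m + 1)), DtrivA b (a ∘ σ) = ε σ * w a := by
      intro σ
      have h1 : DtrivA b (a ∘ σ) = w (a ∘ σ) := congrFun hb (a ∘ σ)
      rw [h1, AlternatingMap.map_perm, Units.smul_def, zsmul_eq_mul]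
    have hcardeq : ∑ σ : Equiv.Perm (Fin (m + 1)), ε σ * DtrivA b (a ∘ σ)
        = (Fintype.card (Equiv.Perm (Fin (m + 1))) : ℝ) * w a := by
      rw [Finset.sum_congr rfl (fun σ _ => by rw [hval σ, ← mul_assoc, hε2 σ, one_mul])]
      rw [Finset.sum_const, nsmul_eq_mul]
      rfl
    rw [hcardeq] at key
    have hcard : (Fintype.card (Equiv.Perm (Fin (m + 1))) : ℝ) ≠ 0 := by
      have : 0 < Fintype.card (Equiv.Perm (Fin (m + 1))) := Fintype.card_pos
      exact_mod_cast this.ne'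
    rcases mul_eq_zero.mp key with h | h
    · exact hcard h
    · exact ha h
end
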